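/- Let n = 2k, e a divisor of k, h : F_{2^e} → F_{2^e} arbitrary, and F^i(x) = x^{2^i} h(Tr^n_e(x)) on F_{2^n}. If e = k and h is a permutation of F_{2^k}, then for every α ∈ F_{2^n} \ F_{2^k}, the function x ↦ Tr^n_1(αF^i(x)) is bent; consequently F^i has the maximal number 2^n - 2^k of bent components. -/

import Mathlib

open Finset

def chr (b : ZMod 2) : ℤ := if b = 0 then 1 else -1

variable {K : Type*} [Field K] [Fintype K] [Algebra (ZMod 2) K]

/-- The absolute trace `Tr^n_1 : F_{2^n} → F_2`. -/
noncomputable def tr (x : K) : ZMod 2 := Algebra.trace (ZMod 2) K x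

/-- The Walsh transform of a Boolean function `f` on `K = F_{2^n}`. -/
noncomputable def walshF (f : K → ZMod 2) (l : K) : ℤ :=
  ∑ x, chr (f x + tr (l * x))

/-- `f` is bent on `K = F_{2^{2k}}`: all Walsh values are `±2^k`. -/
def IsBentF (k : ℕ) (f : K → ZMod 2) : Prop :=
  ∀ l : K, walshF f l = 2 ^ k ∨ walshF f l = -(2 ^ k)

set_option linter.unusedSectionVars false

open Polynomial

lemma chr_add (a b : ZMod 2) : chr (a + b) = chr a * chr b := by
  revert a b; decide

lemma chr_cases (a : ZMod 2) : chr a = 1 ∨ chr a = -1 := by revert a; decide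

lemma tr_add (x y : K) : tr (x + y) = tr x + tr y := map_add (Algebra.trace (ZMod 2) K) x y

lemma tr_zero : tr (0 : K) = 0 := map_zero (Algebra.trace (ZMod 2) K)

lemma tr_sq (x : K) : tr (x ^ 2) = tr x := by
  haveI : CharP K 2 := charP_of_injective_algebraMap' (A := K) (ZMod 2) 2
  haveI : PerfectRing K 2 :=
    PerfectRing.ofSurjective _ _ (Finite.surjective_of_injective (frobenius_inj K 2))
  haveI : Fact (Nat.Prime 2) := ⟨Nat.prime_two⟩
  let e : K ≃ₐ[ZMod 2] K := AlgEquiv.ofRingEquiv (f := frobeniusEquiv K 2)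
    (fun a => by
      show (algebraMap (ZMod 2) K a) ^ 2 = _
      rw [← map_pow]
      congr 1
      exact ZMod.pow_card a)
  have := Algebra.trace_eq_of_algEquiv e x
  exact this

lemma tr_pow2 (m : ℕ) (x : K) : tr (x ^ 2 ^ m) = tr x := by
  induction m with
  | zero => simp
  | succ n ih => rw [pow_succ, pow_mul, tr_sq, ih]

noncomputable def LK (K : Type*) [Field K] [Fintype K] (k : ℕ) : Finset K :=
  @Finset.filter _ (fun a => a ^ 2 ^ k = a) (Classical.decPred _) Finset.univ

lemma mem_LK {k : ℕ} {a : K} : a ∈ LK K k ↔ a ^ 2 ^ k = a := by simp [LK]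

lemma LK_zero {k : ℕ} : (0 : K) ∈ LK K k := by
  rw [mem_LK]; exact zero_pow (by positivity)

lemma LK_add {k : ℕ} {a b : K} (ha : a ∈ LK K k) (hb : b ∈ LK K k) : a + b ∈ LK K k := by
  haveI : CharP K 2 := charP_of_injective_algebraMap' (A := K) (ZMod 2) 2
  rw [mem_LK] at *
  rw [add_pow_char_pow, ha, hb]

lemma LK_mul {k : ℕ} {a b : K} (ha : a ∈ LK K k) (hb : b ∈ LK K k) : a * b ∈ LK K k := by
  rw [mem_LK] at *
  rw [mul_pow, ha, hb]

lemma pow2_injective (m : ℕ) {x y : K} (hxy : x ^ 2 ^ m = y ^ 2 ^ m) : x = y := by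
  haveI : CharP K 2 := charP_of_injective_algebraMap' (A := K) (ZMod 2) 2
  have : (x - y) ^ 2 ^ m = 0 := by rw [sub_pow_char_pow, hxy, sub_self]
  have := pow_eq_zero_iff (n := 2 ^ m) (by positivity) |>.mp this
  exact sub_eq_zero.mp this

lemma LK_pow2_iff {k : ℕ} (m : ℕ) {x : K} : x ^ 2 ^ m ∈ LK K k ↔ x ∈ LK K k := by
  rw [mem_LK, mem_LK, ← pow_mul, mul_comm, pow_mul]
  constructor
  · intro hx; exact pow2_injective m hx
  · intro hx; rw [hx]

lemma LK_spow {k : ℕ} {s : K} (hs : s ∈ LK K k) (q r : ℕ) :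
    s ^ 2 ^ (k * q + r) = s ^ 2 ^ r := by
  rw [mem_LK] at hs
  induction q with
  | zero => simp
  | succ n ih =>
      have : k * (n + 1) + r = k + (k * n + r) := by ring
      rw [this, pow_add, mul_comm (2 ^ k : ℕ), pow_mul, ih, ← pow_mul,
        mul_comm (2 ^ r : ℕ), pow_mul, hs]

lemma LK_card_le (k : ℕ) (hk : 0 < k) : (LK K k).card ≤ 2 ^ k := by
  classical
  set p : K[X] := X ^ 2 ^ k - X with hp
  have hdeg : p.natDegree = 2 ^ k := by
    rw [hp]
    have h1 : (X : K[X]).natDegree < (X ^ 2 ^ k : K[X]).natDegree := by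
      rw [natDegree_X_pow, natDegree_X]
      exact Nat.one_lt_two_pow_iff.mpr hk.ne'
    rw [natDegree_sub_eq_left_of_natDegree_lt h1, natDegree_X_pow]
  have hp0 : p ≠ 0 := by
    intro h
    rw [h, natDegree_zero] at hdeg
    exact absurd hdeg.symm (by positivity)
  have hsub : LK K k ⊆ p.roots.toFinset := by
    intro a ha
    rw [mem_LK] at ha
    rw [Multiset.mem_toFinset, mem_roots hp0]
    simp [hp, ha]
  calc (LK K k).card ≤ p.roots.toFinset.card := Finset.card_le_card hsub
    _ ≤ Multiset.card p.roots := Multiset.toFinset_card_le _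
    _ ≤ p.natDegree := p.card_roots'
    _ = 2 ^ k := hdeg

lemma LK_main (k : ℕ) (hk : 0 < k) (hcard : Fintype.card K = 2 ^ (2 * k)) :
    (LK K k).card = 2 ^ k ∧ ∀ u ∈ LK K k, ∃ x : K, x + x ^ 2 ^ k = u := by
  classical
  haveI : CharP K 2 := charP_of_injective_algebraMap' (A := K) (ZMod 2) 2
  have hmapsto : ∀ x : K, x + x ^ 2 ^ k ∈ LK K k := by
    intro x
    rw [mem_LK, add_pow_char_pow, ← pow_mul, ← pow_add]
    have : k + k = 2 * k := by ring
    rw [this, ← hcard, FiniteField.pow_card]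
    ring
  have hfib := Finset.card_eq_sum_card_fiberwise
    (f := fun x : K => x + x ^ 2 ^ k) (s := Finset.univ) (t := LK K k)
    (fun x _ => hmapsto x)
  have hfle : ∀ u ∈ LK K k,
      (Finset.univ.filter (fun x : K => x + x ^ 2 ^ k = u)).card ≤ (LK K k).card := by
    intro u hu
    rcases (Finset.univ.filter (fun x : K => x + x ^ 2 ^ k = u)).eq_empty_or_nonempty with he | hne
    · simp [he]
    · obtain ⟨x0, hx0⟩ := hne
      simp only [Finset.mem_filter] at hx0
      have h2K : (2 : K) = 0 := CharTwo.two_eq_zero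
      apply Finset.card_le_card_of_injOn (fun x => x + x0)
      · intro x hx
        simp only [Finset.coe_filter, Finset.mem_coe, Finset.mem_filter, Set.mem_setOf_eq] at hx
        rw [Finset.mem_coe, mem_LK, add_pow_char_pow]
        have h1 : x ^ 2 ^ k = x + u := by linear_combination hx.2 - x * h2K
        have h2 : x0 ^ 2 ^ k = x0 + u := by linear_combination hx0.2 - x0 * h2K
        linear_combination h1 + h2 + u * h2K
      · intro a _ b _ hab
        exact add_right_cancel hab
  have hle : (LK K k).card ≤ 2 ^ k := LK_card_le k hk
  have hpow2 : (2:ℕ) ^ (2*k) = 2 ^ k * 2 ^ k := by rw [two_mul, pow_add]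
  have hsum_le : (2 : ℕ) ^ (2 * k) ≤ (LK K k).card * (LK K k).card := by
    calc (2:ℕ) ^ (2*k) = Fintype.card K := hcard.symm
      _ = Finset.univ.card := (Finset.card_univ).symm
      _ = ∑ u ∈ LK K k, (Finset.univ.filter (fun x : K => x + x ^ 2 ^ k = u)).card := hfib
      _ ≤ ∑ _u ∈ LK K k, (LK K k).card := Finset.sum_le_sum hfle
      _ = (LK K k).card * (LK K k).card := by rw [Finset.sum_const, smul_eq_mul]
  have hcardL : (LK K k).card = 2 ^ k := by
    have h3 : 2 ^ k * 2 ^ k ≤ 2 ^ k * (LK K k).card := by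
      calc 2 ^ k * 2 ^ k = 2 ^ (2*k) := hpow2.symm
        _ ≤ (LK K k).card * (LK K k).card := hsum_le
        _ ≤ 2 ^ k * (LK K k).card := Nat.mul_le_mul_right _ hle
    have h2 : 2 ^ k ≤ (LK K k).card := Nat.le_of_mul_le_mul_left h3 (by positivity)
    omega
  refine ⟨hcardL, ?_⟩
  -- surjectivity: every fiber over LK is nonempty
  intro u hu
  by_contra hempty
  push_neg at hempty
  have hzero : (Finset.univ.filter (fun x : K => x + x ^ 2 ^ k = u)).card = 0 := by
    rw [Finset.card_eq_zero, Finset.filter_eq_empty_iff]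
    intro x _; exact hempty x
  have hlt : ∑ v ∈ LK K k, (Finset.univ.filter (fun x : K => x + x ^ 2 ^ k = v)).card
      < ∑ _v ∈ LK K k, 2 ^ k := by
    apply Finset.sum_lt_sum (fun v hv => (hfle v hv).trans (le_of_eq hcardL))
    exact ⟨u, hu, by rw [hzero]; positivity⟩
  rw [Finset.sum_const, smul_eq_mul, hcardL] at hlt
  rw [← hfib, Finset.card_univ, hcard] at hlt
  omega

lemma tr_LK {k : ℕ} (hk : 0 < k) (hcard : Fintype.card K = 2 ^ (2 * k)) {a : K}
    (ha : a ∈ LK K k) : tr a = 0 := by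
  obtain ⟨x, hx⟩ := (LK_main k hk hcard).2 a ha
  rw [← hx, tr_add, tr_pow2]
  exact CharTwo.add_self_eq_zero _

/-- pairing: a sum of characters vanishes if the "linear part" is somewhere nonzero -/
lemma pair_sum {S : Finset K} {e : K → ZMod 2} (hadd : ∀ x y, e (x + y) = e x + e y)
    {s0 : K} (hmem : ∀ x, x ∈ S → x + s0 ∈ S) (h1 : e s0 ≠ 0) :
    ∑ x ∈ S, chr (e x) = 0 := by
  haveI : CharP K 2 := charP_of_injective_algebraMap' (A := K) (ZMod 2) 2
  have hinv : ∀ x : K, x + s0 + s0 = x := by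
    intro x; rw [add_assoc, CharTwo.add_self_eq_zero, add_zero]
  have key : ∑ x ∈ S, chr (e x) = ∑ x ∈ S, chr (e (x + s0)) := by
    apply Finset.sum_nbij' (i := fun x => x + s0) (j := fun x => x + s0)
    · intro a ha; exact hmem a ha
    · intro a ha; exact hmem a ha
    · intro a _; exact hinv a
    · intro a _; exact hinv a
    · intro a _; rw [hinv]
  have hs0 : e s0 = 1 := by
    have hz : ∀ a : ZMod 2, a ≠ 0 → a = 1 := by decide
    exact hz _ h1
  have key2 : ∀ x : K, chr (e (x + s0)) = - chr (e x) := by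
    intro x; rw [hadd, hs0, chr_add]
    simp [chr]
  rw [Finset.sum_congr rfl (fun x _ => key2 x), Finset.sum_neg_distrib] at key
  linarith

lemma trace_exists : ∃ y : K, tr y ≠ 0 := by
  haveI : FiniteDimensional (ZMod 2) K := Module.Finite.of_finite
  haveI : Algebra.IsSeparable (ZMod 2) K := inferInstance
  have h := Algebra.trace_ne_zero (ZMod 2) K
  by_contra hc
  push_neg at hc
  apply h
  ext x
  exact hc x

/-- sum over LK of the character attached to `δ` is `2^k` when `δ ∈ LK` -/
lemma csum_mem {k : ℕ} (hk : 0 < k) (hcard : Fintype.card K = 2 ^ (2 * k)) {δ : K}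
    (hδ : δ ∈ LK K k) : ∑ s ∈ LK K k, chr (tr (δ * s)) = 2 ^ k := by
  have : ∀ s ∈ LK K k, chr (tr (δ * s)) = 1 := by
    intro s hs
    rw [tr_LK hk hcard (LK_mul hδ hs)]
    rfl
  rw [Finset.sum_congr rfl this, Finset.sum_const, (LK_main k hk hcard).1]
  simp

lemma ann_eq {k : ℕ} (hk : 0 < k) (hcard : Fintype.card K = 2 ^ (2 * k)) {δ : K}
    (hδ : δ ∉ LK K k) : ∃ s ∈ LK K k, tr (δ * s) ≠ 0 := by
  classical
  by_contra hc
  push_neg at hc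
  -- counting argument
  set A : Finset K := Finset.univ.filter (fun δ : K => ∀ s ∈ LK K k, tr (δ * s) = 0) with hA
  have hLA : LK K k ⊆ A := by
    intro a ha
    rw [hA, Finset.mem_filter]
    exact ⟨Finset.mem_univ _, fun s hs => tr_LK hk hcard (LK_mul ha hs)⟩
  have hδA : δ ∈ A := by
    rw [hA, Finset.mem_filter]; exact ⟨Finset.mem_univ _, hc⟩
  -- the double sum
  have hdouble : ∑ d : K, ∑ s ∈ LK K k, chr (tr (d * s)) = 2 ^ (2 * k) := by
    rw [Finset.sum_comm]
    have hzero : ∀ s ∈ LK K k, s ≠ 0 → ∑ d : K, chr (tr (d * s)) = 0 := by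
      intro s _ hs0
      obtain ⟨y, hy⟩ := trace_exists (K := K)
      apply pair_sum (e := fun d => tr (d * s)) (s0 := y * s⁻¹)
      · intro x z
        show tr ((x + z) * s) = tr (x * s) + tr (z * s)
        rw [add_mul, tr_add]
      · intro x _; exact Finset.mem_univ _
      · rwa [mul_assoc, inv_mul_cancel₀ hs0, mul_one]
    have h0mem : (0 : K) ∈ LK K k := by
      rw [mem_LK]; exact zero_pow (by positivity)
    rw [← Finset.add_sum_erase _ _ h0mem]
    have h1 : ∑ d : K, chr (tr (d * (0:K))) = 2 ^ (2*k) := by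
      have : ∀ d : K, chr (tr (d * (0:K))) = 1 := by
        intro d; rw [mul_zero, show tr (0:K) = 0 from map_zero _]; rfl
      rw [Finset.sum_congr rfl (fun d _ => this d), Finset.sum_const, Finset.card_univ, hcard]
      simp
    have h2 : ∑ s ∈ (LK K k).erase 0, ∑ d : K, chr (tr (d * s)) = 0 := by
      apply Finset.sum_eq_zero
      intro s hs
      exact hzero s (Finset.mem_of_mem_erase hs) (Finset.ne_of_mem_erase hs)
    rw [h1, h2, add_zero]
  -- each inner sum is 2^k on A and 0 off A
  have hsplit : ∀ d : K, ∑ s ∈ LK K k, chr (tr (d * s)) = if d ∈ A then 2 ^ k else 0 := by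
    intro d
    by_cases hd : d ∈ A
    · rw [if_pos hd]
      rw [hA, Finset.mem_filter] at hd
      have : ∀ s ∈ LK K k, chr (tr (d * s)) = 1 := fun s hs => by rw [hd.2 s hs]; rfl
      rw [Finset.sum_congr rfl this, Finset.sum_const, (LK_main k hk hcard).1]
      simp
    · rw [if_neg hd]
      rw [hA, Finset.mem_filter] at hd
      push_neg at hd
      obtain ⟨s0, hs0, hs0'⟩ := hd (Finset.mem_univ _)
      apply pair_sum (e := fun s => tr (d * s)) (s0 := s0)
      · intro x z
        show tr (d * (x + z)) = tr (d * x) + tr (d * z)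
        rw [mul_add, tr_add]
      · intro x hx; exact LK_add hx hs0
      · exact hs0'
  have hcardA : (A.card : ℤ) * 2 ^ k = 2 ^ (2 * k) := by
    rw [← hdouble, Finset.sum_congr rfl (fun d _ => hsplit d)]
    rw [Finset.sum_ite_mem, Finset.univ_inter, Finset.sum_const]
    simp [mul_comm]
  have hAcard : A.card = 2 ^ k := by
    have h2k : (2:ℤ) ^ (2*k) = 2 ^ k * 2 ^ k := by rw [two_mul, pow_add]
    have := hcardA
    rw [h2k] at this
    have h2 : ((A.card : ℤ)) = 2 ^ k := by
      have hpos : (0:ℤ) < 2 ^ k := by positivity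
      exact mul_right_cancel₀ (ne_of_gt hpos) this
    exact_mod_cast h2
  have : A = LK K k := by
    apply (Finset.eq_of_subset_of_card_le hLA _).symm
    rw [hAcard, (LK_main k hk hcard).1]
  rw [this] at hδA
  exact hδ hδA

lemma csum_not_mem {k : ℕ} (hk : 0 < k) (hcard : Fintype.card K = 2 ^ (2 * k)) {δ : K}
    (hδ : δ ∉ LK K k) : ∑ s ∈ LK K k, chr (tr (δ * s)) = 0 := by
  obtain ⟨s0, hs0, hs0'⟩ := ann_eq hk hcard hδ
  apply pair_sum (e := fun s => tr (δ * s)) (s0 := s0)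
  · intro x z
    show tr (δ * (x + z)) = tr (δ * x) + tr (δ * z)
    rw [mul_add, tr_add]
  · intro x hx; exact LK_add hx hs0
  · exact hs0'

lemma alpha_mul_mem {k : ℕ} {α₀ w : K} (hα₀ : α₀ ^ 2 ^ k ≠ α₀) (hw : w ∈ LK K k)
    (hmem : α₀ * w ∈ LK K k) : w = 0 := by
  rw [mem_LK] at hw hmem
  rw [mul_pow, hw] at hmem
  by_contra hw0
  apply hα₀
  have := mul_right_cancel₀ hw0 hmem
  exact this

lemma char2_add_eq_zero {a b : K} (h : a + b = 0) : a = b := by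
  haveI : CharP K 2 := charP_of_injective_algebraMap' (A := K) (ZMod 2) 2
  have h2 : (2:K) = 0 := CharTwo.two_eq_zero
  linear_combination h - b * h2

lemma decomp_inj {k : ℕ} {α₀ : K} (hα₀ : α₀ ^ 2 ^ k ≠ α₀) :
    ∀ p ∈ (LK K k) ×ˢ (LK K k), ∀ q ∈ (LK K k) ×ˢ (LK K k),
      p.2 + α₀ * p.1 = q.2 + α₀ * q.1 → p = q := by
  haveI : CharP K 2 := charP_of_injective_algebraMap' (A := K) (ZMod 2) 2
  have h2 : (2:K) = 0 := CharTwo.two_eq_zero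
  rintro ⟨t1, s1⟩ hp ⟨t2, s2⟩ hq heq
  simp only [Finset.mem_product] at hp hq
  have hsum : α₀ * (t1 + t2) = s1 + s2 := by
    linear_combination heq + (α₀ * t2 - s1) * h2
  have hmem : α₀ * (t1 + t2) ∈ LK K k := hsum ▸ LK_add hp.2 hq.2
  have ht : t1 + t2 = 0 := alpha_mul_mem hα₀ (LK_add hp.1 hq.1) hmem
  have ht' : t1 = t2 := char2_add_eq_zero ht
  have hs : s1 = s2 := by
    rw [ht, mul_zero] at hsum
    exact (char2_add_eq_zero hsum.symm)
  simp [ht', hs]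

lemma decomp_surj {k : ℕ} (hk : 0 < k) (hcard : Fintype.card K = 2 ^ (2 * k)) {α₀ : K}
    (hα₀ : α₀ ^ 2 ^ k ≠ α₀) (x : K) :
    ∃ t ∈ LK K k, ∃ s ∈ LK K k, x = s + α₀ * t := by
  classical
  set I := ((LK K k) ×ˢ (LK K k)).image (fun p : K × K => p.2 + α₀ * p.1) with hI
  have hcardI : I.card = Fintype.card K := by
    rw [hI, Finset.card_image_of_injOn (fun p hp q hq => decomp_inj hα₀ p hp q hq),
      Finset.card_product, (LK_main k hk hcard).1, hcard, two_mul, pow_add]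
  have : I = Finset.univ := Finset.eq_univ_of_card I (by rw [hcardI])
  have hx : x ∈ I := this ▸ Finset.mem_univ x
  rw [hI, Finset.mem_image] at hx
  obtain ⟨⟨t, s⟩, hp, hps⟩ := hx
  simp only [Finset.mem_product] at hp
  exact ⟨t, hp.1, s, hp.2, hps.symm⟩

lemma sum_decomp {k : ℕ} (hk : 0 < k) (hcard : Fintype.card K = 2 ^ (2 * k)) {α₀ : K}
    (hα₀ : α₀ ^ 2 ^ k ≠ α₀) (F : K → ℤ) :
    ∑ x : K, F x = ∑ t ∈ LK K k, ∑ s ∈ LK K k, F (s + α₀ * t) := by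
  classical
  set I := ((LK K k) ×ˢ (LK K k)).image (fun p : K × K => p.2 + α₀ * p.1) with hI
  have hcardI : I.card = Fintype.card K := by
    rw [hI, Finset.card_image_of_injOn (fun p hp q hq => decomp_inj hα₀ p hp q hq),
      Finset.card_product, (LK_main k hk hcard).1, hcard, two_mul, pow_add]
  have hIu : I = Finset.univ := Finset.eq_univ_of_card I (by rw [hcardI])
  calc ∑ x : K, F x = ∑ x ∈ I, F x := by rw [hIu]
    _ = ∑ p ∈ (LK K k) ×ˢ (LK K k), F (p.2 + α₀ * p.1) :=
        Finset.sum_image (fun p hp q hq => decomp_inj hα₀ p hp q hq)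
    _ = ∑ t ∈ LK K k, ∑ s ∈ LK K k, F (s + α₀ * t) := by
        rw [Finset.sum_product]

lemma tr_shift {k i : ℕ} (hk : 0 < k) {s : K} (hs : s ∈ LK K k) (γ : K) :
    tr (γ * s ^ 2 ^ i) = tr (γ ^ 2 ^ (k - i % k) * s) := by
  have hr : s ^ 2 ^ i = s ^ 2 ^ (i % k) := by
    conv_lhs => rw [← Nat.div_add_mod i k]
    exact LK_spow hs (i / k) (i % k)
  have hrk : i % k + (k - i % k) = k := by
    have := Nat.mod_lt i hk
    omega
  rw [hr, ← tr_pow2 (k - i % k) (γ * s ^ 2 ^ (i % k)), mul_pow, ← pow_mul, ← pow_add, hrk]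
  rw [mem_LK] at hs
  rw [hs]

lemma walsh_formula (k i : ℕ) (hk : 0 < k) (hcard : Fintype.card K = 2 ^ (2 * k))
    (h : K → K) (γ β α₀ : K) (hα₀ : α₀ ^ 2 ^ k ≠ α₀) :
    walshF (fun x => tr (γ * (x ^ 2 ^ i * h (x + x ^ 2 ^ k)))) β
    = ∑ t ∈ LK K k,
        chr (tr (γ * α₀ ^ 2 ^ i * t ^ 2 ^ i * h ((α₀ + α₀ ^ 2 ^ k) * t)) + tr (β * (α₀ * t)))
        * ∑ s ∈ LK K k,
            chr (tr (((γ * h ((α₀ + α₀ ^ 2 ^ k) * t)) ^ 2 ^ (k - i % k) + β) * s)) := by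
  haveI : CharP K 2 := charP_of_injective_algebraMap' (A := K) (ZMod 2) 2
  have h2 : (2:K) = 0 := CharTwo.two_eq_zero
  rw [walshF, sum_decomp hk hcard hα₀]
  apply Finset.sum_congr rfl
  intro t ht
  rw [Finset.mul_sum]
  apply Finset.sum_congr rfl
  intro s hs
  have hs' : s ^ 2 ^ k = s := mem_LK.mp hs
  have ht' : t ^ 2 ^ k = t := mem_LK.mp ht
  have hT : (s + α₀ * t) + (s + α₀ * t) ^ 2 ^ k = (α₀ + α₀ ^ 2 ^ k) * t := by
    rw [add_pow_char_pow, mul_pow, hs', ht']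
    linear_combination s * h2
  have hxi : (s + α₀ * t) ^ 2 ^ i = s ^ 2 ^ i + α₀ ^ 2 ^ i * t ^ 2 ^ i := by
    rw [add_pow_char_pow, mul_pow]
  rw [hT, hxi]
  set H := h ((α₀ + α₀ ^ 2 ^ k) * t) with hH
  have e1 : γ * ((s ^ 2 ^ i + α₀ ^ 2 ^ i * t ^ 2 ^ i) * H)
      = (γ * H) * s ^ 2 ^ i + γ * α₀ ^ 2 ^ i * t ^ 2 ^ i * H := by ring
  rw [e1, tr_add, tr_shift hk hs (γ * H)]
  have e3 : β * (s + α₀ * t) = β * s + β * (α₀ * t) := by ring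
  rw [e3, tr_add]
  have e4 : tr ((γ * H) ^ 2 ^ (k - i % k) * s) + tr (γ * α₀ ^ 2 ^ i * t ^ 2 ^ i * H)
        + (tr (β * s) + tr (β * (α₀ * t)))
      = (tr (γ * α₀ ^ 2 ^ i * t ^ 2 ^ i * H) + tr (β * (α₀ * t)))
        + tr (((γ * H) ^ 2 ^ (k - i % k) + β) * s) := by
    rw [add_mul, tr_add]
    ring
  rw [e4, chr_add]

lemma pow_K (k : ℕ) (hcard : Fintype.card K = 2 ^ (2 * k)) (x : K) : x ^ 2 ^ (2 * k) = x := by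
  have := FiniteField.pow_card x
  rwa [hcard] at this

lemma c_mem {k : ℕ} (hcard : Fintype.card K = 2 ^ (2 * k)) (α₀ : K) :
    α₀ + α₀ ^ 2 ^ k ∈ LK K k := by
  haveI : CharP K 2 := charP_of_injective_algebraMap' (A := K) (ZMod 2) 2
  rw [mem_LK, add_pow_char_pow, ← pow_mul, ← pow_add]
  have h2k : k + k = 2 * k := by ring
  rw [h2k, pow_K k hcard]
  ring

lemma bent_of_not_mem (k i : ℕ) (hk : 0 < k) (hcard : Fintype.card K = 2 ^ (2 * k))
    (h : K → K) (hperm : Set.BijOn h {a : K | a ^ (2 ^ k) = a} {a : K | a ^ (2 ^ k) = a})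
    (α : K) (hα : α ^ 2 ^ k ≠ α) :
    IsBentF k (fun x => tr (α * (x ^ (2 ^ i) * h (x + x ^ (2 ^ k))))) := by
  classical
  haveI : CharP K 2 := charP_of_injective_algebraMap' (A := K) (ZMod 2) 2
  have h2 : (2:K) = 0 := CharTwo.two_eq_zero
  intro β
  rw [walsh_formula k i hk hcard h α β α hα]
  set c : K := α + α ^ 2 ^ k with hc
  set m : ℕ := k - i % k with hm
  -- β₁ with β₁ ^ 2 ^ m = β
  set β₁ : K := β ^ 2 ^ (2 * k - m) with hβ₁def
  have hmle : m ≤ 2 * k := by omega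
  have hβ₁ : β₁ ^ 2 ^ m = β := by
    rw [hβ₁def, ← pow_mul, ← pow_add]
    have : 2 * k - m + m = 2 * k := by omega
    rw [this, pow_K k hcard]
  obtain ⟨t0, ht0, s0, hs0, hβ₁d⟩ := decomp_surj hk hcard hα β₁
  -- membership facts
  have hcm : c ∈ LK K k := c_mem hcard α
  have hc0 : c ≠ 0 := by
    intro hc0
    exact hα (char2_add_eq_zero (by rw [← hc]; exact hc0)).symm
  have hmain : ∀ t, t ∈ LK K k → ((α * h (c * t)) ^ 2 ^ m + β ∈ LK K k ↔ h (c * t) = t0) := by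
    intro t ht
    have hct : c * t ∈ LK K k := LK_mul hcm ht
    have hh : h (c * t) ∈ LK K k := by
      rw [mem_LK]
      exact hperm.1 (mem_LK.mp hct)
    have h1 : (α * h (c * t)) ^ 2 ^ m + β = (α * h (c * t) + β₁) ^ 2 ^ m := by
      rw [add_pow_char_pow, hβ₁]
    rw [h1, LK_pow2_iff]
    constructor
    · intro hmem
      have hsum : α * h (c * t) + β₁ + s0 = α * (h (c * t) + t0) := by
        rw [hβ₁d]; linear_combination s0 * h2
      have : α * (h (c * t) + t0) ∈ LK K k := hsum ▸ LK_add hmem hs0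
      have hz : h (c * t) + t0 = 0 := alpha_mul_mem hα (LK_add hh ht0) this
      exact char2_add_eq_zero hz
    · intro heq
      have : α * h (c * t) + β₁ = s0 := by
        rw [hβ₁d, heq]; linear_combination α * t0 * h2
      rw [this]; exact hs0
  -- the unique t
  obtain ⟨u, hu, huh⟩ := hperm.2.2 (show t0 ∈ {a : K | a ^ 2 ^ k = a} from mem_LK.mp ht0)
  have hu' : u ∈ LK K k := mem_LK.mpr hu
  have hcinv : c⁻¹ ∈ LK K k := by
    rw [mem_LK, inv_pow, mem_LK.mp hcm]
  set t₁ : K := c⁻¹ * u with ht₁def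
  have ht₁ : t₁ ∈ LK K k := LK_mul hcinv hu'
  have hct₁ : c * t₁ = u := by
    rw [ht₁def]; field_simp
  have huniq : ∀ t ∈ LK K k, (h (c * t) = t0 ↔ t = t₁) := by
    intro t ht
    constructor
    · intro heq
      have : c * t = u := by
        apply hperm.2.1 (mem_LK.mp (LK_mul hcm ht)) hu
        rw [heq, huh]
      rw [ht₁def, ← this]
      field_simp
    · intro heq; rw [heq, hct₁, huh]
  have hterm : ∀ t ∈ LK K k,
      chr (tr (α * α ^ 2 ^ i * t ^ 2 ^ i * h (c * t)) + tr (β * (α * t)))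
        * (∑ s ∈ LK K k, chr (tr (((α * h (c * t)) ^ 2 ^ m + β) * s)))
      = if t = t₁ then
          chr (tr (α * α ^ 2 ^ i * t₁ ^ 2 ^ i * h (c * t₁)) + tr (β * (α * t₁))) * 2 ^ k
        else 0 := by
    intro t ht
    by_cases htt : t = t₁
    · subst htt
      rw [if_pos rfl]
      congr 1
      apply csum_mem hk hcard
      rw [hmain t₁ ht₁, huniq t₁ ht₁]
    · rw [if_neg htt]
      have : (α * h (c * t)) ^ 2 ^ m + β ∉ LK K k := by
        rw [hmain t ht, huniq t ht]; exact htt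
      rw [csum_not_mem hk hcard this, mul_zero]
  rw [Finset.sum_congr rfl hterm, Finset.sum_ite_eq' (LK K k) t₁, if_pos ht₁]
  rcases chr_cases (tr (α * α ^ 2 ^ i * t₁ ^ 2 ^ i * h (c * t₁)) + tr (β * (α * t₁))) with hx | hx
  · left; rw [hx, one_mul]
  · right; rw [hx]; ring

lemma not_bent_of_mem (k i : ℕ) (hk : 0 < k) (hcard : Fintype.card K = 2 ^ (2 * k))
    (h : K → K) (hperm : Set.BijOn h {a : K | a ^ (2 ^ k) = a} {a : K | a ^ (2 ^ k) = a})
    (α : K) (hα : α ^ 2 ^ k = α) :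
    ¬ IsBentF k (fun x => tr (α * (x ^ (2 ^ i) * h (x + x ^ (2 ^ k))))) := by
  classical
  intro hbent
  -- pick α₀ outside the subfield
  have hlt : (LK K k).card < (Finset.univ : Finset K).card := by
    rw [(LK_main k hk hcard).1, Finset.card_univ, hcard]
    have : 2 * k = k + k := by ring
    rw [this, pow_add]
    nlinarith [Nat.one_lt_two_pow_iff.mpr hk.ne', pow_pos (by norm_num : (0:ℕ) < 2) k]
  obtain ⟨α₀, hα₀'⟩ : ∃ a : K, a ∉ LK K k := by
    by_contra hcon
    push_neg at hcon
    rw [Finset.eq_univ_of_forall hcon] at hlt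
    exact lt_irrefl _ hlt
  have hα₀ : α₀ ^ 2 ^ k ≠ α₀ := fun hmem => hα₀' (mem_LK.mpr hmem)
  have hb := hbent 0
  rw [walsh_formula k i hk hcard h α 0 α₀ hα₀] at hb
  set c : K := α₀ + α₀ ^ 2 ^ k with hc
  set m : ℕ := k - i % k with hm
  have hcm : c ∈ LK K k := c_mem hcard α₀
  have hαm : α ∈ LK K k := mem_LK.mpr hα
  -- each inner sum is 2^k
  have hinner : ∀ t ∈ LK K k,
      ∑ s ∈ LK K k, chr (tr (((α * h (c * t)) ^ 2 ^ m + 0) * s)) = 2 ^ k := by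
    intro t ht
    apply csum_mem hk hcard
    have hh : h (c * t) ∈ LK K k := mem_LK.mpr (hperm.1 (mem_LK.mp (LK_mul hcm ht)))
    have : (α * h (c * t)) ^ 2 ^ m ∈ LK K k := (LK_pow2_iff m).mpr (LK_mul hαm hh)
    rw [add_zero]
    exact this
  have hb2 : (∑ t ∈ LK K k,
      chr (tr (α * α₀ ^ 2 ^ i * t ^ 2 ^ i * h (c * t)) + tr (0 * (α₀ * t)))) * 2 ^ k = 2 ^ k
      ∨ (∑ t ∈ LK K k,
      chr (tr (α * α₀ ^ 2 ^ i * t ^ 2 ^ i * h (c * t)) + tr (0 * (α₀ * t)))) * 2 ^ k = -2 ^ k := by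
    rw [Finset.sum_mul]
    rw [Finset.sum_congr rfl (fun t ht => by rw [hinner t ht])] at hb
    exact hb
  set M : ℤ := ∑ t ∈ LK K k,
      chr (tr (α * α₀ ^ 2 ^ i * t ^ 2 ^ i * h (c * t)) + tr (0 * (α₀ * t))) with hM
  have hMval : M = 1 ∨ M = -1 := by
    have hp : (0:ℤ) < 2 ^ k := by positivity
    rcases hb2 with h1 | h1
    · left
      have : M * 2 ^ k = 1 * 2 ^ k := by rw [h1, one_mul]
      exact mul_right_cancel₀ (ne_of_gt hp) this
    · right
      have : M * 2 ^ k = (-1) * 2 ^ k := by rw [h1]; ring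
      exact mul_right_cancel₀ (ne_of_gt hp) this
  have hMmod : M % 2 = 0 := by
    rw [hM, Finset.sum_int_mod]
    have : ∀ t ∈ LK K k,
        chr (tr (α * α₀ ^ 2 ^ i * t ^ 2 ^ i * h (c * t)) + tr (0 * (α₀ * t))) % 2 = 1 := by
      intro t _
      rcases chr_cases (tr (α * α₀ ^ 2 ^ i * t ^ 2 ^ i * h (c * t)) + tr (0 * (α₀ * t))) with hx | hx
      · rw [hx]; decide
      · rw [hx]; decide
    rw [Finset.sum_congr rfl this, Finset.sum_const, (LK_main k hk hcard).1]
    simp only [nsmul_eq_mul, mul_one]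
    have : ((2:ℤ) ^ k) % 2 = 0 := by
      have : (2:ℤ) ∣ 2 ^ k := dvd_pow_self 2 hk.ne'
      omega
    push_cast
    omega
  omega

theorem stmt10 (k i : ℕ) (hk : 0 < k) (hcard : Fintype.card K = 2 ^ (2 * k))
    (h : K → K)
    (hperm : Set.BijOn h {a : K | a ^ (2 ^ k) = a} {a : K | a ^ (2 ^ k) = a}) :
    (∀ α : K, α ^ (2 ^ k) ≠ α →
      IsBentF k (fun x => tr (α * (x ^ (2 ^ i) * h (x + x ^ (2 ^ k)))))) ∧
    Nat.card {α : K | α ≠ 0 ∧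
        IsBentF k (fun x => tr (α * (x ^ (2 ^ i) * h (x + x ^ (2 ^ k)))))} =
      2 ^ (2 * k) - 2 ^ k := by
  classical
  constructor
  · intro α hα
    exact bent_of_not_mem k i hk hcard h hperm α hα
  · have hset : {α : K | α ≠ 0 ∧
        IsBentF k (fun x => tr (α * (x ^ (2 ^ i) * h (x + x ^ (2 ^ k)))))}
        = {α : K | ¬ (α ^ 2 ^ k = α)} := by
      ext α
      simp only [Set.mem_setOf_eq]
      constructor
      · rintro ⟨h0, hb⟩ heq
        exact not_bent_of_mem k i hk hcard h hperm α heq hb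
      · intro hα
        refine ⟨?_, bent_of_not_mem k i hk hcard h hperm α hα⟩
        intro h0
        apply hα
        rw [h0]
        rw [zero_pow (by positivity : (2:ℕ)^k ≠ 0)]
    rw [hset]
    have hLeq : Finset.univ.filter (fun a : K => a ^ 2 ^ k = a) = LK K k := by
      ext a; simp [LK]
    rw [Nat.card_eq_fintype_card]
    rw [← Set.toFinset_card, Set.toFinset_setOf]
    rw [Finset.filter_not, Finset.card_sdiff_of_subset (Finset.filter_subset _ _)]
    rw [hLeq, (LK_main k hk hcard).1, Finset.card_univ, hcard]
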